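/- The matrix ρ·I + G is invertible for every real ρ > 0, and the function u : [0,t_F] → ℝ^m defined by u(τ) = F(τ) · (ρ·I + G)⁻¹ · θ̄ satisfies, for every τ ∈ [0,t_F], the optimality equation ρ·u(τ) + F(τ) · ( ∫₀^{t_F} F(σ)ᵀ · u(σ) dσ − θ̄ ) = 0, where θ̄ ∈ ℝⁿ is an arbitrary fixed vector. -/

import Mathlib

open MeasureTheory intervalIntegral Matrix

/-- `F(τ) = Mᵀ · exp(Aᵀ(t_F − τ))`. -/
noncomputable def Fmat {n m : ℕ} (A : Matrix (Fin n) (Fin n) ℝ)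
    (M : Matrix (Fin n) (Fin m) ℝ) (t_F τ : ℝ) : Matrix (Fin m) (Fin n) ℝ :=
  Mᵀ * NormedSpace.exp ((t_F - τ) • Aᵀ)

/-- `G = ∫₀^{t_F} F(τ)ᵀ F(τ) dτ` (entrywise integral). -/
noncomputable def Gmat {n m : ℕ} (A : Matrix (Fin n) (Fin n) ℝ)
    (M : Matrix (Fin n) (Fin m) ℝ) (t_F : ℝ) : Matrix (Fin n) (Fin n) ℝ :=
  Matrix.of fun k l => ∫ τ in (0 : ℝ)..t_F, ((Fmat A M t_F τ)ᵀ * Fmat A M t_F τ) k l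

lemma exp_entry_cont {n : ℕ} (B : Matrix (Fin n) (Fin n) ℝ) (k l : Fin n) :
    Continuous fun τ : ℝ => (NormedSpace.exp (τ • B)) k l := by
  letI : SeminormedRing (Matrix (Fin n) (Fin n) ℝ) := Matrix.linftyOpSemiNormedRing
  letI : NormedRing (Matrix (Fin n) (Fin n) ℝ) := Matrix.linftyOpNormedRing
  letI : NormedAlgebra ℝ (Matrix (Fin n) (Fin n) ℝ) := Matrix.linftyOpNormedAlgebra
  have h : Continuous fun τ : ℝ => NormedSpace.exp (τ • B) :=
    (continuous_iff_continuousAt.2 fun x => (NormedSpace.exp_analytic (𝕂 := ℝ) x).continuousAt).comp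
      (continuous_id.smul continuous_const)
  exact ((continuous_apply l).comp (continuous_apply k)).comp h

lemma Fmat_entry_cont {n m : ℕ} (A : Matrix (Fin n) (Fin n) ℝ)
    (M : Matrix (Fin n) (Fin m) ℝ) (t_F : ℝ) (i : Fin m) (j : Fin n) :
    Continuous fun τ : ℝ => Fmat A M t_F τ i j := by
  have : ∀ τ, Fmat A M t_F τ i j = ∑ k, Mᵀ i k * (NormedSpace.exp ((t_F - τ) • Aᵀ)) k j := by
    intro τ; rfl
  simp only [this]
  refine continuous_finset_sum _ fun k _ => Continuous.mul continuous_const ?_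
  exact (exp_entry_cont Aᵀ k j).comp (continuous_const.sub continuous_id)

lemma FtF_entry_cont {n m : ℕ} (A : Matrix (Fin n) (Fin n) ℝ)
    (M : Matrix (Fin n) (Fin m) ℝ) (t_F : ℝ) (k l : Fin n) :
    Continuous fun τ : ℝ => ((Fmat A M t_F τ)ᵀ * Fmat A M t_F τ) k l := by
  have : ∀ τ, ((Fmat A M t_F τ)ᵀ * Fmat A M t_F τ) k l
      = ∑ i, Fmat A M t_F τ i k * Fmat A M t_F τ i l := by intro τ; rfl
  simp only [this]
  exact continuous_finset_sum _ fun i _ =>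
    (Fmat_entry_cont A M t_F i k).mul (Fmat_entry_cont A M t_F i l)

lemma quad_eq_sum {n m : ℕ} (E : Matrix (Fin n) (Fin n) ℝ) (x : Fin n → ℝ) :
    x ⬝ᵥ E *ᵥ x = ∑ k, ∑ l, x k * (E k l * x l) := by
  simp [dotProduct, Matrix.mulVec, Finset.mul_sum]

lemma integral_double_sum {n : ℕ} {a b : ℝ} (f : Fin n → Fin n → ℝ → ℝ)
    (hf : ∀ k l, IntervalIntegrable (f k l) MeasureTheory.volume a b) :
    ∫ τ in a..b, ∑ k, ∑ l, f k l τ = ∑ k, ∑ l, ∫ τ in a..b, f k l τ := by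
  have h1 : ∀ k, IntervalIntegrable (fun τ => ∑ l, f k l τ)
      MeasureTheory.volume a b := by
    intro k
    have h2 := IntervalIntegrable.sum Finset.univ (fun l _ => hf k l)
    simpa [Finset.sum_fn] using h2
  rw [intervalIntegral.integral_finset_sum (f := fun k τ => ∑ l, f k l τ)
    (fun k _ => h1 k)]
  exact Finset.sum_congr rfl fun k _ =>
    intervalIntegral.integral_finset_sum (fun l _ => hf k l)

lemma quad_form_eq {n m : ℕ} (A : Matrix (Fin n) (Fin n) ℝ)
    (M : Matrix (Fin n) (Fin m) ℝ) (t_F : ℝ) (x : Fin n → ℝ) :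
    x ⬝ᵥ (Gmat A M t_F) *ᵥ x
      = ∫ τ in (0:ℝ)..t_F, (Fmat A M t_F τ *ᵥ x) ⬝ᵥ (Fmat A M t_F τ *ᵥ x) := by
  have key : ∀ τ, (Fmat A M t_F τ *ᵥ x) ⬝ᵥ (Fmat A M t_F τ *ᵥ x)
      = ∑ k, ∑ l, x k * (((Fmat A M t_F τ)ᵀ * Fmat A M t_F τ) k l * x l) := by
    intro τ
    have h : (Fmat A M t_F τ *ᵥ x) ⬝ᵥ (Fmat A M t_F τ *ᵥ x)
        = x ⬝ᵥ ((Fmat A M t_F τ)ᵀ * Fmat A M t_F τ) *ᵥ x := by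
      rw [← Matrix.mulVec_mulVec, Matrix.dotProduct_mulVec x,
        Matrix.vecMul_transpose]
    rw [h, quad_eq_sum (m := m)]
  rw [intervalIntegral.integral_congr (g := fun τ =>
      ∑ k, ∑ l, x k * (((Fmat A M t_F τ)ᵀ * Fmat A M t_F τ) k l * x l))
      (fun τ _ => key τ)]
  have hint : ∀ (k l : Fin n), IntervalIntegrable
      (fun τ => x k * (((Fmat A M t_F τ)ᵀ * Fmat A M t_F τ) k l * x l))
      MeasureTheory.volume 0 t_F :=
    fun k l => (continuous_const.mul ((FtF_entry_cont A M t_F k l).mul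
      continuous_const)).intervalIntegrable _ _
  rw [integral_double_sum _ hint, quad_eq_sum (m := m)]
  refine Finset.sum_congr rfl fun k _ => Finset.sum_congr rfl fun l _ => ?_
  rw [intervalIntegral.integral_const_mul, intervalIntegral.integral_mul_const]
  rfl

/-- The matrix `ρI + G` is invertible for every `ρ > 0`, and
`u(τ) = F(τ)(ρI + G)⁻¹ θ̄` satisfies the optimality equation
`ρ u(τ) + F(τ)(∫₀^{t_F} F(σ)ᵀ u(σ) dσ − θ̄) = 0` for every `τ ∈ [0, t_F]`. -/
theorem unconstrained_opt_control_formula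
    {n m : ℕ} (A : Matrix (Fin n) (Fin n) ℝ) (M : Matrix (Fin n) (Fin m) ℝ)
    (t_F : ℝ) (ht : 0 < t_F) (ρ : ℝ) (hρ : 0 < ρ) (θbar : Fin n → ℝ)
    (u : ℝ → Fin m → ℝ)
    (hu : ∀ τ ∈ Set.Icc (0 : ℝ) t_F, u τ =
      (Fmat A M t_F τ).mulVec
        ((ρ • (1 : Matrix (Fin n) (Fin n) ℝ) + Gmat A M t_F)⁻¹.mulVec θbar)) :
    IsUnit (ρ • (1 : Matrix (Fin n) (Fin n) ℝ) + Gmat A M t_F) ∧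
    ∀ τ ∈ Set.Icc (0 : ℝ) t_F,
      ρ • u τ +
        (Fmat A M t_F τ).mulVec
          ((fun k => ∫ σ in (0 : ℝ)..t_F, (Fmat A M t_F σ)ᵀ.mulVec (u σ) k) - θbar)
        = 0 := by
  set S : Matrix (Fin n) (Fin n) ℝ := ρ • (1 : Matrix (Fin n) (Fin n) ℝ) + Gmat A M t_F
    with hSdef
  -- Hermitian
  have hGsym : (Gmat A M t_F).IsHermitian := by
    ext k l
    simp only [Matrix.conjTranspose_apply, RCLike.star_def, starRingEnd_apply, star_trivial,
      Gmat, Matrix.of_apply]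
    congr 1
    funext τ
    simp [Matrix.mul_apply, mul_comm]
  have hSherm : S.IsHermitian := by
    unfold Matrix.IsHermitian
    rw [hSdef, Matrix.conjTranspose_add, hGsym]
    congr 1
    simp [Matrix.conjTranspose_smul]
  -- positive definiteness
  have hpos : S.PosDef := by
    refine Matrix.PosDef.of_dotProduct_mulVec_pos hSherm fun x hx => ?_
    have hxs : star x = x := by funext i; exact star_trivial _
    rw [hxs, hSdef, Matrix.add_mulVec, dotProduct_add, Matrix.smul_mulVec,
      Matrix.one_mulVec, dotProduct_smul]
    have h1 : 0 < x ⬝ᵥ x := by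
      obtain ⟨i, hi⟩ := Function.ne_iff.mp hx
      have hi' : x i ≠ 0 := by simpa using hi
      exact Finset.sum_pos' (fun j _ => mul_self_nonneg (x j))
        ⟨i, Finset.mem_univ i, mul_self_pos.mpr hi'⟩
    have h2 : 0 ≤ x ⬝ᵥ Gmat A M t_F *ᵥ x := by
      rw [quad_form_eq A M t_F x]
      refine intervalIntegral.integral_nonneg ht.le fun τ _ => ?_
      exact Finset.sum_nonneg fun i _ => mul_self_nonneg _
    have : ρ * (x ⬝ᵥ x) > 0 := mul_pos hρ h1
    simp only [smul_eq_mul]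
    linarith
  have hS : IsUnit S := hpos.isUnit
  refine ⟨hS, ?_⟩
  set v : Fin n → ℝ := S⁻¹.mulVec θbar with hvdef
  have hSinv : S * S⁻¹ = 1 :=
    Matrix.mul_nonsing_inv _ ((Matrix.isUnit_iff_isUnit_det _).1 hS)
  have hSv : S *ᵥ v = θbar := by
    rw [hvdef, Matrix.mulVec_mulVec, hSinv, Matrix.one_mulVec]
  have hint_key : ∀ k, (∫ σ in (0 : ℝ)..t_F, (Fmat A M t_F σ)ᵀ.mulVec (u σ) k)
      = (Gmat A M t_F *ᵥ v) k := by
    intro k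
    have hcong : Set.EqOn (fun σ => (Fmat A M t_F σ)ᵀ.mulVec (u σ) k)
        (fun σ => ∑ l, ((Fmat A M t_F σ)ᵀ * Fmat A M t_F σ) k l * v l)
        (Set.uIcc (0 : ℝ) t_F) := by
      intro σ hσ
      rw [Set.uIcc_of_le ht.le] at hσ
      simp only [hu σ hσ, Matrix.mulVec_mulVec]
      rfl
    rw [intervalIntegral.integral_congr hcong,
      intervalIntegral.integral_finset_sum
        (f := fun l σ => ((Fmat A M t_F σ)ᵀ * Fmat A M t_F σ) k l * v l) (fun l _ =>
        (((FtF_entry_cont A M t_F k l).mul continuous_const).intervalIntegrable _ _ :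
          IntervalIntegrable (fun σ => ((Fmat A M t_F σ)ᵀ * Fmat A M t_F σ) k l * v l)
            MeasureTheory.volume 0 t_F))]
    simp only [intervalIntegral.integral_mul_const]
    rfl
  intro τ hτ
  have hvec : ((fun k => ∫ σ in (0 : ℝ)..t_F, (Fmat A M t_F σ)ᵀ.mulVec (u σ) k) - θbar)
      = Gmat A M t_F *ᵥ v - θbar := by
    funext k
    simp [Pi.sub_apply, hint_key k]
  rw [hu τ hτ, hvec, ← Matrix.mulVec_smul, ← Matrix.mulVec_add]
  have hzero : ρ • v + (Gmat A M t_F *ᵥ v - θbar) = 0 := by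
    have hexp : S *ᵥ v = ρ • v + Gmat A M t_F *ᵥ v := by
      rw [hSdef, Matrix.add_mulVec, Matrix.smul_mulVec, Matrix.one_mulVec]
    rw [hexp] at hSv
    calc ρ • v + (Gmat A M t_F *ᵥ v - θbar)
        = (ρ • v + Gmat A M t_F *ᵥ v) - θbar := by abel
      _ = θbar - θbar := by rw [hSv]
      _ = 0 := sub_self _
  rw [hzero, Matrix.mulVec_zero]
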